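/- For every n ≥ 0, the polynomials satisfy P^D_n(t) + P^D̃_n(t) = P^B_n(t) and P^D_n(t) − P^D̃_n(t) = (1−t)^n (as identities of polynomials in t); consequently 2·P^D_n(t) = P^B_n(t) + (1−t)^n and 2·P^D̃_n(t) = P^B_n(t) − (1−t)^n. -/

import Mathlib

open MeasureTheory Finset

/-- Number of descents of a finite sequence given as a list. -/
def descCount {α : Type*} [LT α] [DecidableRel ((· < ·) : α → α → Prop)] : List α → ℕ
  | a :: b :: rest => (if b < a then 1 else 0) + descCount (b :: rest)
  | _ => 0

/-- Type A Eulerian number: permutations of {1,…,n} with k descents. -/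
def eulerianA (n k : ℕ) : ℕ :=
  Fintype.card {σ : Equiv.Perm (Fin n) // descCount (List.ofFn fun i => σ i) = k}

/-- Eulerian polynomial of type A. -/
noncomputable def polyA (n : ℕ) (t : ℝ) : ℝ :=
  ∑ k ∈ Finset.range (n + 1), (eulerianA n k : ℝ) * t ^ k

/-- The underlying set {-n, …, -1, 0, 1, …, n}. -/
abbrev BSet (n : ℕ) : Type := {x : ℤ // x ∈ Finset.Icc (-(n : ℤ)) (n : ℤ)}

def negB {n : ℕ} (x : BSet n) : BSet n :=
  ⟨-x.1, by have := x.2; simp only [Finset.mem_Icc] at *; omega⟩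

def posB {n : ℕ} (i : Fin n) : BSet n :=
  ⟨((i : ℕ) : ℤ) + 1, by have := i.isLt; simp only [Finset.mem_Icc]; omega⟩

/-- A permutation of {-n,…,n} is a signed permutation if σ(-k) = -σ(k). -/
def IsSigned {n : ℕ} (σ : Equiv.Perm (BSet n)) : Prop :=
  ∀ x : BSet n, (σ (negB x)).1 = -((σ x).1)

noncomputable instance {n : ℕ} (σ : Equiv.Perm (BSet n)) : Decidable (IsSigned σ) :=
  inferInstanceAs (Decidable (∀ x : BSet n, (σ (negB x)).1 = -((σ x).1)))

/-- Number of descents of the sequence (0, σ(1), …, σ(n)). -/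
def descB {n : ℕ} (σ : Equiv.Perm (BSet n)) : ℕ :=
  descCount ((0 : ℤ) :: List.ofFn fun i : Fin n => (σ (posB i)).1)

/-- Number of negative terms among σ(1), …, σ(n). -/
def negCount {n : ℕ} (σ : Equiv.Perm (BSet n)) : ℕ :=
  (Finset.univ.filter fun i : Fin n => (σ (posB i)).1 < 0).card

/-- Type B Eulerian number. -/
noncomputable def eulerianB (n k : ℕ) : ℕ :=
  Fintype.card {σ : Equiv.Perm (BSet n) // IsSigned σ ∧ descB σ = k}

/-- Primary type D Eulerian number. -/
noncomputable def eulerianD (n k : ℕ) : ℕ :=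
  Fintype.card {σ : Equiv.Perm (BSet n) //
    (IsSigned σ ∧ Even (negCount σ)) ∧ descB σ = k}

/-- Complementary type D Eulerian number. -/
noncomputable def eulerianDt (n k : ℕ) : ℕ :=
  Fintype.card {σ : Equiv.Perm (BSet n) //
    (IsSigned σ ∧ ¬ Even (negCount σ)) ∧ descB σ = k}

noncomputable def polyB (n : ℕ) (t : ℝ) : ℝ :=
  ∑ k ∈ Finset.range (n + 1), (eulerianB n k : ℝ) * t ^ k

noncomputable def polyD (n : ℕ) (t : ℝ) : ℝ :=
  ∑ k ∈ Finset.range (n + 1), (eulerianD n k : ℝ) * t ^ k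

noncomputable def polyDt (n : ℕ) (t : ℝ) : ℝ :=
  ∑ k ∈ Finset.range (n + 1), (eulerianDt n k : ℝ) * t ^ k

noncomputable def polyBP (n : ℕ) : Polynomial ℝ :=
  ∑ k ∈ Finset.range (n + 1), Polynomial.C (eulerianB n k : ℝ) * Polynomial.X ^ k

noncomputable def polyDP (n : ℕ) : Polynomial ℝ :=
  ∑ k ∈ Finset.range (n + 1), Polynomial.C (eulerianD n k : ℝ) * Polynomial.X ^ k

noncomputable def polyDtP (n : ℕ) : Polynomial ℝ :=
  ∑ k ∈ Finset.range (n + 1), Polynomial.C (eulerianDt n k : ℝ) * Polynomial.X ^ k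

section Aux
open Polynomial

lemma descCount_cons_cons {α} [LT α] [DecidableRel ((· < ·) : α → α → Prop)] (a b : α) (l : List α) :
    descCount (a :: b :: l) = (if b < a then 1 else 0) + descCount (b :: l) := rfl

lemma descCount_cons_le (a : ℤ) (l : List ℤ) : descCount (a :: l) ≤ l.length := by
  induction l generalizing a with
  | nil => simp [descCount]
  | cons b t ih =>
    rw [descCount_cons_cons]
    have := ih b
    simp only [List.length_cons]
    split <;> omega

lemma flip_ofFn : ∀ (N : ℕ) (v v' : Fin N → ℤ) (j : Fin N) (a : ℤ),
    (j : ℕ) + 1 < N →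
    (∀ i, i ≠ j → v' i = v i) → v' j = - v j →
    (∀ i, i ≠ j → |v i| < |v j|) → |a| < |v j| →
    descCount (a :: List.ofFn v) = descCount (a :: List.ofFn v') := by
  intro N
  induction N with
  | zero => exact fun v v' j => j.elim0
  | succ k ih =>
    intro v v' j a hj hne hflip habs ha
    induction j using Fin.cases with
    | zero =>
      -- j = 0, need k ≥ 1
      match k, hj with
      | k' + 1, hj =>
        rw [List.ofFn_succ, List.ofFn_succ, List.ofFn_succ, List.ofFn_succ]
        have h10 : (Fin.succ 0 : Fin (k'+2)) ≠ (0 : Fin (k'+2)) := Fin.succ_ne_zero 0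
        have e1 : v' (Fin.succ 0) = v (Fin.succ 0) := hne _ h10
        have e2 : (fun i : Fin k' => v' (Fin.succ (Fin.succ i))) =
            (fun i : Fin k' => v (Fin.succ (Fin.succ i))) := by
          funext i
          exact hne _ (Fin.succ_ne_zero _)
        rw [descCount_cons_cons, descCount_cons_cons, descCount_cons_cons, descCount_cons_cons,
          e1, e2, hflip]
        have h1 := habs _ h10
        rw [abs_lt] at h1 ha
        have : ((if v 0 < a then 1 else 0) + (if v (Fin.succ 0) < v 0 then 1 else 0) : ℕ)
            = (if -v 0 < a then 1 else 0) + (if v (Fin.succ 0) < -v 0 then 1 else 0) := by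
          rcases abs_cases (v 0) with ⟨hc, _⟩ | ⟨hc, _⟩ <;> rw [hc] at h1 ha <;>
            split_ifs <;> omega
        omega
    | succ j' =>
      rw [List.ofFn_succ, List.ofFn_succ]
      have h0 : (0 : Fin (k+1)) ≠ Fin.succ j' := (Fin.succ_ne_zero j').symm
      rw [descCount_cons_cons, descCount_cons_cons, hne 0 h0]
      congr 1
      exact ih (v ∘ Fin.succ) (v' ∘ Fin.succ) j' (v 0)
        (by simpa using hj)
        (fun i hi => hne _ (by simpa using Fin.succ_injective _ |>.ne_iff.mpr hi))
        hflip
        (fun i hi => habs _ (by simpa using Fin.succ_injective _ |>.ne_iff.mpr hi))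
        (habs 0 h0)
end Aux
lemma desc_concat : ∀ (N : ℕ) (v : Fin (N + 1) → ℤ) (a : ℤ),
    (∀ i : Fin N, |v i.castSucc| < |v (Fin.last N)|) → |a| < |v (Fin.last N)| →
    descCount (a :: List.ofFn v) =
      descCount (a :: List.ofFn (v ∘ Fin.castSucc)) + (if v (Fin.last N) < 0 then 1 else 0) := by
  intro N
  induction N with
  | zero =>
    intro v a _ ha
    show (if v (Fin.last 0) < a then 1 else 0) + 0 = 0 + _
    rw [abs_lt] at ha
    rcases abs_cases (v (Fin.last 0)) with ⟨hc, _⟩ | ⟨hc, _⟩ <;> rw [hc] at ha <;>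
      split_ifs <;> omega
  | succ k ih =>
    intro v a habs ha
    have hlast : (Fin.last k).succ = Fin.last (k + 1) := Fin.succ_last k
    have e0 : (v ∘ Fin.castSucc) 0 = v 0 := by simp
    have etail : (fun i : Fin k => (v ∘ Fin.castSucc) i.succ) =
        (fun i : Fin k => ((v ∘ Fin.succ) ∘ Fin.castSucc) i) := by
      funext i
      simp [-Fin.castSucc_succ, Fin.succ_castSucc]
    rw [List.ofFn_succ (f := v), List.ofFn_succ (f := v ∘ Fin.castSucc),
      descCount_cons_cons, descCount_cons_cons, e0, etail]
    have hrec := ih (v ∘ Fin.succ) (v 0)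
      (fun i => by
        have := habs i.succ
        simpa [-Fin.castSucc_succ, Fin.succ_castSucc, hlast] using this)
      (by have := habs 0; simpa [hlast] using this)
    simp only [Function.comp_def, Fin.succ_last, Fin.succ_castSucc, Nat.succ_eq_add_one]
      at hrec ⊢
    omega
def sgnLetter {n : ℕ} (p : Fin n × Bool) : ℤ :=
  cond p.2 (-((p.1 : ℕ) : ℤ) - 1) (((p.1 : ℕ) : ℤ) + 1)

lemma sgnLetter_abs {n : ℕ} (p : Fin n × Bool) : |sgnLetter p| = ((p.1 : ℕ) : ℤ) + 1 := by
  rcases p with ⟨i, b⟩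
  cases b
  · show |((i : ℕ) : ℤ) + 1| = _
    have h : (0:ℤ) < ((i : ℕ) : ℤ) + 1 := by omega
    rw [abs_of_pos h]
  · show |(-((i : ℕ) : ℤ) - 1)| = _
    have h : (-((i : ℕ) : ℤ) - 1) < 0 := by omega
    rw [abs_of_neg h]
    ring

lemma sgnLetter_not {n : ℕ} (i : Fin n) (b : Bool) :
    sgnLetter (i, !b) = - sgnLetter (i, b) := by
  cases b
  · show -((i : ℕ) : ℤ) - 1 = -(((i : ℕ) : ℤ) + 1); ring
  · show ((i : ℕ) : ℤ) + 1 = -(-((i : ℕ) : ℤ) - 1); ring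

lemma sgnLetter_neg_iff {n : ℕ} (p : Fin n × Bool) : sgnLetter p < 0 ↔ p.2 = true := by
  rcases p with ⟨i, b⟩
  cases b
  · show ((i : ℕ) : ℤ) + 1 < 0 ↔ _
    simp; omega
  · show -((i : ℕ) : ℤ) - 1 < 0 ↔ _
    simp; omega

lemma sgnLetter_val {n m : ℕ} (p : Fin n × Bool) (q : Fin m × Bool)
    (h1 : ((p.1 : ℕ)) = ((q.1 : ℕ))) (h2 : p.2 = q.2) : sgnLetter p = sgnLetter q := by
  rcases p with ⟨i, b⟩; rcases q with ⟨j, c⟩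
  simp only at h1 h2
  subst h2
  simp [sgnLetter, h1]

def wDesc {n : ℕ} (w : Fin n → Fin n × Bool) : ℕ :=
  descCount ((0 : ℤ) :: List.ofFn fun i => sgnLetter (w i))

def wNeg {n : ℕ} (w : Fin n → Fin n × Bool) : ℕ :=
  (Finset.univ.filter fun i => (w i).2).card

noncomputable def wSum (n : ℕ) : Polynomial ℝ :=
  ∑ w ∈ Finset.univ.filter
      (fun w : Fin n → Fin n × Bool => Function.Injective fun i => (w i).1),
    (-1 : Polynomial ℝ) ^ (wNeg w) * Polynomial.X ^ (wDesc w)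

lemma negOnePow_wNeg {n : ℕ} (w : Fin n → Fin n × Bool) :
    ((-1 : Polynomial ℝ)) ^ (wNeg w) = ∏ j : Fin n, (if (w j).2 then (-1 : Polynomial ℝ) else 1) := by
  rw [Finset.prod_ite, Finset.prod_const, Finset.prod_const, one_pow, mul_one, wNeg]

lemma wSum_zero : wSum 0 = 1 := by
  rw [wSum]
  have h1 : (Finset.univ.filter
      (fun w : Fin 0 → Fin 0 × Bool => Function.Injective fun i => (w i).1)) = Finset.univ := by
    apply Finset.filter_true_of_mem
    intro w _ i
    exact fun j _ => Subsingleton.elim i j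
  have h2 : (Finset.univ : Finset (Fin 0 → Fin 0 × Bool)) = {fun i => i.elim0} :=
    Finset.eq_singleton_iff_unique_mem.mpr
      ⟨Finset.mem_univ _, fun w _ => funext fun i => i.elim0⟩
  rw [h1, h2, Finset.sum_singleton]
  have h3 : wNeg (fun i : Fin 0 => i.elim0) = 0 := by simp [wNeg]
  have h4 : wDesc (fun i : Fin 0 => i.elim0) = 0 := by simp [wDesc, descCount]
  rw [h3, h4]
  simp
def gFlip {n : ℕ} (w : Fin (n+1) → Fin (n+1) × Bool) : Fin (n+1) → Fin (n+1) × Bool :=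
  fun j => if (w j).1 = Fin.last n then ((w j).1, !(w j).2) else w j

lemma gFlip_fst {n : ℕ} (w : Fin (n+1) → Fin (n+1) × Bool) (j : Fin (n+1)) :
    ((gFlip w j).1) = (w j).1 := by
  unfold gFlip; split <;> rfl


lemma gFlip_invol {n : ℕ} (w : Fin (n+1) → Fin (n+1) × Bool) : gFlip (gFlip w) = w := by
  funext j
  show (if (gFlip w j).1 = Fin.last n then ((gFlip w j).1, !(gFlip w j).2) else gFlip w j) = w j
  by_cases h : (w j).1 = Fin.last n
  · have h1 : gFlip w j = ((w j).1, !(w j).2) := if_pos h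
    have h2 : (gFlip w j).1 = Fin.last n := by rw [h1]; exact h
    rw [if_pos h2, h1]
    simp
  · have h1 : gFlip w j = w j := if_neg h
    rw [h1, if_neg h]

lemma gFlip_key {n : ℕ} (w : Fin (n+1) → Fin (n+1) × Bool)
    (hw : Function.Injective fun i => (w i).1) (hlast : ¬ (w (Fin.last n)).1 = Fin.last n) :
    wDesc (gFlip w) = wDesc w ∧
    ((-1 : Polynomial ℝ)) ^ (wNeg (gFlip w)) = -((-1 : Polynomial ℝ) ^ (wNeg w)) := by
  obtain ⟨j₀, hj₀'⟩ := (Finite.injective_iff_surjective.mp hw) (Fin.last n)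
  have hj₀ : (w j₀).1 = Fin.last n := hj₀'
  have hj₀ne : j₀ ≠ Fin.last n := fun h => hlast (h ▸ hj₀)
  have huniq : ∀ i, i ≠ j₀ → (w i).1 ≠ Fin.last n := fun i hi hc =>
    hi (hw (show (w i).1 = (w j₀).1 by rw [hc, hj₀]))
  have hsame : ∀ i, i ≠ j₀ → gFlip w i = w i := fun i hi => if_neg (huniq i hi)
  have hflipj : gFlip w j₀ = ((w j₀).1, !(w j₀).2) := if_pos hj₀
  have hvallt : ∀ i, i ≠ j₀ → ((w i).1 : ℕ) < n := fun i hi => Fin.val_lt_last (huniq i hi)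
  have hvalj : ((w j₀).1 : ℕ) = n := by rw [hj₀]; rfl
  constructor
  · unfold wDesc
    refine (flip_ofFn (n+1) (fun i => sgnLetter (w i)) (fun i => sgnLetter (gFlip w i)) j₀ 0
      ?_ ?_ ?_ ?_ ?_).symm
    · have := Fin.val_lt_last hj₀ne; omega
    · exact fun i hi => congrArg sgnLetter (hsame i hi)
    · show sgnLetter (gFlip w j₀) = -sgnLetter (w j₀)
      rw [hflipj]
      rw [show sgnLetter (w j₀) = sgnLetter ((w j₀).1, (w j₀).2) from rfl]
      exact sgnLetter_not _ _
    · intro i hi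
      show |sgnLetter (w i)| < |sgnLetter (w j₀)|
      rw [sgnLetter_abs, sgnLetter_abs]
      have := hvallt i hi
      omega
    · show |(0:ℤ)| < |sgnLetter (w j₀)|
      rw [sgnLetter_abs]
      simp only [abs_zero]
      omega
  · rw [negOnePow_wNeg, negOnePow_wNeg,
      ← Finset.mul_prod_erase _ _ (Finset.mem_univ j₀),
      ← Finset.mul_prod_erase _ _ (Finset.mem_univ j₀)]
    have hprod : ∏ j ∈ Finset.univ.erase j₀, (if (gFlip w j).2 then (-1 : Polynomial ℝ) else 1)
        = ∏ j ∈ Finset.univ.erase j₀, (if (w j).2 then (-1 : Polynomial ℝ) else 1) :=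
      Finset.prod_congr rfl fun j hj => by rw [hsame j (Finset.ne_of_mem_erase hj)]
    rw [hprod, hflipj]
    have : (if (((w j₀).1, !(w j₀).2) : Fin (n+1) × Bool).2 then (-1 : Polynomial ℝ) else 1)
        = -(if (w j₀).2 then (-1 : Polynomial ℝ) else 1) := by
      cases h : (w j₀).2 <;> simp [h]
    rw [this]
    ring

lemma sum2_zero (n : ℕ) :
    ∑ w ∈ ((Finset.univ.filter
        (fun w : Fin (n+1) → Fin (n+1) × Bool => Function.Injective fun i => (w i).1)).filter
        (fun w => ¬ (w (Fin.last n)).1 = Fin.last n)),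
      (-1 : Polynomial ℝ) ^ (wNeg w) * Polynomial.X ^ (wDesc w) = 0 := by
  refine Finset.sum_involution (fun w _ => gFlip w) ?_ ?_ ?_ ?_
  · intro w hw
    rw [Finset.mem_filter, Finset.mem_filter] at hw
    obtain ⟨⟨_, hinj⟩, hlast⟩ := hw
    obtain ⟨hd, hs⟩ := gFlip_key w hinj hlast
    rw [hd, hs]
    ring
  · intro w hw _
    rw [Finset.mem_filter, Finset.mem_filter] at hw
    obtain ⟨⟨_, hinj⟩, hlast⟩ := hw
    obtain ⟨j₀, hj₀'⟩ := (Finite.injective_iff_surjective.mp hinj) (Fin.last n)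
    have hj₀ : (w j₀).1 = Fin.last n := hj₀'
    intro hc
    have := congrArg (fun v => (v j₀).2) hc
    rw [show gFlip w j₀ = ((w j₀).1, !(w j₀).2) from if_pos hj₀] at this
    simp at this
  · intro w hw
    rw [Finset.mem_filter, Finset.mem_filter] at hw ⊢
    obtain ⟨⟨_, hinj⟩, hlast⟩ := hw
    have hfst : (fun i => ((gFlip w) i).1) = fun i => (w i).1 := funext (gFlip_fst w)
    refine ⟨⟨Finset.mem_univ _, by rw [hfst]; exact hinj⟩, by rw [gFlip_fst]; exact hlast⟩
  · intro w _
    exact gFlip_invol w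
def resW {n : ℕ} (w : Fin (n+1) → Fin (n+1) × Bool) : Fin n → Fin n × Bool :=
  fun i => if h : ((w i.castSucc).1 : ℕ) < n then (⟨(w i.castSucc).1, h⟩, (w i.castSucc).2)
    else (⟨0, Nat.lt_of_le_of_lt (Nat.zero_le _) i.isLt⟩, false)

def extW {n : ℕ} (u : Fin n → Fin n × Bool) (b : Bool) : Fin (n+1) → Fin (n+1) × Bool :=
  fun j => if h : (j : ℕ) < n then ((u ⟨j, h⟩).1.castSucc, (u ⟨j, h⟩).2) else (Fin.last n, b)

lemma resW_apply {n : ℕ} (w : Fin (n+1) → Fin (n+1) × Bool) (i : Fin n)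
    (h : ((w i.castSucc).1 : ℕ) < n) :
    resW w i = (⟨(w i.castSucc).1, h⟩, (w i.castSucc).2) := dif_pos h

lemma extW_apply_lt {n : ℕ} (u : Fin n → Fin n × Bool) (b : Bool) (j : Fin (n+1))
    (h : (j : ℕ) < n) : extW u b j = ((u ⟨j, h⟩).1.castSucc, (u ⟨j, h⟩).2) := dif_pos h

lemma extW_apply_last {n : ℕ} (u : Fin n → Fin n × Bool) (b : Bool) :
    extW u b (Fin.last n) = (Fin.last n, b) := dif_neg (by simp)

section S1
variable {n : ℕ} {w : Fin (n+1) → Fin (n+1) × Bool}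

lemma hlt_of_mem (hinj : Function.Injective fun i => (w i).1)
    (hlastw : (w (Fin.last n)).1 = Fin.last n) (i : Fin n) : ((w i.castSucc).1 : ℕ) < n := by
  apply Fin.val_lt_last
  intro hc
  have : i.castSucc = Fin.last n := hinj (show (w i.castSucc).1 = (w (Fin.last n)).1 by
    rw [hc, hlastw])
  exact absurd this (Fin.ne_of_lt (Fin.castSucc_lt_last i))

lemma resW_spec (hinj : Function.Injective fun i => (w i).1)
    (hlastw : (w (Fin.last n)).1 = Fin.last n) (i : Fin n) :
    ((resW w i).1 : ℕ) = ((w i.castSucc).1 : ℕ) ∧ (resW w i).2 = (w i.castSucc).2 := by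
  rw [resW_apply w i (hlt_of_mem hinj hlastw i)]
  exact ⟨rfl, rfl⟩

lemma wNeg_resW (hinj : Function.Injective fun i => (w i).1)
    (hlastw : (w (Fin.last n)).1 = Fin.last n) :
    wNeg w = wNeg (resW w) + (if (w (Fin.last n)).2 then 1 else 0) := by
  rw [wNeg, wNeg, Finset.card_filter, Finset.card_filter, Fin.sum_univ_castSucc]
  congr 1
  apply Finset.sum_congr rfl
  intro i _
  rw [(resW_spec hinj hlastw i).2]

lemma wDesc_resW (hinj : Function.Injective fun i => (w i).1)
    (hlastw : (w (Fin.last n)).1 = Fin.last n) :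
    wDesc w = wDesc (resW w) + (if (w (Fin.last n)).2 then 1 else 0) := by
  rw [wDesc, wDesc]
  have hconc := desc_concat n (fun j => sgnLetter (w j)) 0
    (fun i => by
      show |sgnLetter (w i.castSucc)| < |sgnLetter (w (Fin.last n))|
      rw [sgnLetter_abs, sgnLetter_abs]
      have h1 := hlt_of_mem hinj hlastw i
      have h2 : ((w (Fin.last n)).1 : ℕ) = n := by rw [hlastw]; rfl
      omega)
    (by
      show |(0:ℤ)| < |sgnLetter (w (Fin.last n))|
      rw [sgnLetter_abs]
      simp only [abs_zero]
      omega)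
  have hfun : List.ofFn ((fun j => sgnLetter (w j)) ∘ Fin.castSucc)
      = List.ofFn fun i => sgnLetter (resW w i) :=
    congrArg List.ofFn (funext fun i => sgnLetter_val _ _
      ((resW_spec hinj hlastw i).1.symm) ((resW_spec hinj hlastw i).2.symm))
  rw [hconc, hfun]
  congr 1
  show (if sgnLetter (w (Fin.last n)) < 0 then 1 else 0) = _
  rw [show sgnLetter (w (Fin.last n)) = sgnLetter ((w (Fin.last n)).1, (w (Fin.last n)).2)
    from rfl]
  by_cases hb : (w (Fin.last n)).2
  · rw [if_pos hb, if_pos ((sgnLetter_neg_iff _).mpr hb)]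
  · rw [if_neg hb, if_neg (fun hc => hb ((sgnLetter_neg_iff _).mp hc))]

end S1

lemma sum1_eq (n : ℕ) :
    ∑ w ∈ ((Finset.univ.filter
        (fun w : Fin (n+1) → Fin (n+1) × Bool => Function.Injective fun i => (w i).1)).filter
        (fun w => (w (Fin.last n)).1 = Fin.last n)),
      (-1 : Polynomial ℝ) ^ (wNeg w) * Polynomial.X ^ (wDesc w)
    = (1 - Polynomial.X) * wSum n := by
  have key : ∑ w ∈ ((Finset.univ.filter
        (fun w : Fin (n+1) → Fin (n+1) × Bool => Function.Injective fun i => (w i).1)).filter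
        (fun w => (w (Fin.last n)).1 = Fin.last n)),
      (-1 : Polynomial ℝ) ^ (wNeg w) * Polynomial.X ^ (wDesc w)
      = ∑ p ∈ (Finset.univ.filter
          (fun u : Fin n → Fin n × Bool => Function.Injective fun i => (u i).1)) ×ˢ
          (Finset.univ : Finset Bool),
        (-1 : Polynomial ℝ) ^ (wNeg p.1 + (if p.2 then 1 else 0)) *
          Polynomial.X ^ (wDesc p.1 + (if p.2 then 1 else 0)) := by
    apply Finset.sum_nbij' (i := fun w => (resW w, (w (Fin.last n)).2))
      (j := fun p => extW p.1 p.2)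
    · -- hi
      intro w hw
      rw [Finset.mem_filter, Finset.mem_filter] at hw
      obtain ⟨⟨_, hinj⟩, hlastw⟩ := hw
      rw [Finset.mem_product, Finset.mem_filter]
      refine ⟨⟨Finset.mem_univ _, ?_⟩, Finset.mem_univ _⟩
      intro i i' hii
      have h1 := (resW_spec hinj hlastw i).1
      have h2 := (resW_spec hinj hlastw i').1
      have hii' : (resW w i).1 = (resW w i').1 := hii
      have hv : ((w i.castSucc).1 : ℕ) = ((w i'.castSucc).1 : ℕ) := by
        rw [← h1, ← h2]
        exact congrArg Fin.val hii'
      have : i.castSucc = i'.castSucc := hinj (Fin.ext hv)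
      exact Fin.castSucc_injective n this
    · -- hj
      rintro ⟨u, b⟩ hp
      rw [Finset.mem_product, Finset.mem_filter] at hp
      obtain ⟨⟨_, hinj⟩, _⟩ := hp
      rw [Finset.mem_filter, Finset.mem_filter]
      refine ⟨⟨Finset.mem_univ _, ?_⟩, by rw [extW_apply_last]⟩
      intro j j' hjj
      simp only at hjj
      by_cases hj : (j : ℕ) < n <;> by_cases hj' : (j' : ℕ) < n
      · rw [extW_apply_lt u b j hj, extW_apply_lt u b j' hj'] at hjj
        have := hinj (Fin.castSucc_injective n hjj)
        exact Fin.ext (congrArg (fun x : Fin n => (x : ℕ)) this)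
      · have hj'l : j' = Fin.last n := Fin.ext (by have := j'.isLt; simp only [Fin.val_last]; omega)
        rw [extW_apply_lt u b j hj, hj'l, extW_apply_last] at hjj
        have h := congrArg Fin.val hjj
        simp only [Fin.coe_castSucc, Fin.val_last] at h
        exact absurd h (Nat.ne_of_lt (u ⟨j, hj⟩).1.isLt)
      · have hjl : j = Fin.last n := Fin.ext (by have := j.isLt; simp only [Fin.val_last]; omega)
        rw [extW_apply_lt u b j' hj', hjl, extW_apply_last] at hjj
        have h := congrArg Fin.val hjj
        simp only [Fin.coe_castSucc, Fin.val_last] at h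
        exact absurd h.symm (Nat.ne_of_lt (u ⟨j', hj'⟩).1.isLt)
      · exact Fin.ext (by have := j.isLt; have := j'.isLt; omega)
    · -- left_inv
      intro w hw
      rw [Finset.mem_filter, Finset.mem_filter] at hw
      obtain ⟨⟨_, hinj⟩, hlastw⟩ := hw
      funext j
      by_cases hj : (j : ℕ) < n
      · rw [show extW (resW w) ((w (Fin.last n)).2) j
            = ((resW w ⟨j, hj⟩).1.castSucc, (resW w ⟨j, hj⟩).2) from extW_apply_lt _ _ j hj]
        have hcs : (⟨(j : ℕ), hj⟩ : Fin n).castSucc = j := Fin.ext rfl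
        have h1 := (resW_spec hinj hlastw ⟨j, hj⟩).1
        have h2 := (resW_spec hinj hlastw ⟨j, hj⟩).2
        rw [hcs] at h1 h2
        exact Prod.ext (Fin.ext (by simpa using h1)) h2
      · have hjl : j = Fin.last n := Fin.ext (by have := j.isLt; simp only [Fin.val_last]; omega)
        subst hjl
        rw [extW_apply_last]
        exact Prod.ext hlastw.symm rfl
    · -- right_inv
      rintro ⟨u, b⟩ hp
      refine Prod.ext ?_ (by simp only; rw [extW_apply_last])
      simp only
      funext i
      have hcast : ((i.castSucc : Fin (n+1)) : ℕ) < n := i.isLt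
      have hei : extW u b i.castSucc = ((u i).1.castSucc, (u i).2) := by
        rw [extW_apply_lt u b i.castSucc hcast]
        have : (⟨((i.castSucc : Fin (n+1)) : ℕ), hcast⟩ : Fin n) = i := Fin.ext rfl
        rw [this]
      have hlt : ((extW u b i.castSucc).1 : ℕ) < n := by
        rw [hei]
        exact (u i).1.isLt
      rw [resW_apply _ i hlt]
      refine Prod.ext (Fin.ext ?_) ?_
      · show ((extW u b i.castSucc).1 : ℕ) = ((u i).1 : ℕ)
        rw [hei]
        simp
      · show (extW u b i.castSucc).2 = (u i).2
        rw [hei]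
    · -- value equality
      intro w hw
      rw [Finset.mem_filter, Finset.mem_filter] at hw
      obtain ⟨⟨_, hinj⟩, hlastw⟩ := hw
      rw [wNeg_resW hinj hlastw, wDesc_resW hinj hlastw]
  rw [key, Finset.sum_product, wSum, Finset.mul_sum]
  apply Finset.sum_congr rfl
  intro u _
  rw [Fintype.sum_bool]
  norm_num
  ring
lemma wSum_eq (n : ℕ) : wSum n = (1 - Polynomial.X) ^ n := by
  induction n with
  | zero => simp [wSum_zero]
  | succ k ih =>
    rw [wSum, ← Finset.sum_filter_add_sum_filter_not _
      (fun w : Fin (k+1) → Fin (k+1) × Bool => (w (Fin.last k)).1 = Fin.last k),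
      sum1_eq, sum2_zero, add_zero, ih, pow_succ]
    ring
section Bridge
variable {n : ℕ}

def zeroB (n : ℕ) : BSet n := ⟨0, by simp⟩

lemma negB_zeroB : negB (zeroB n) = zeroB n := Subtype.ext (by simp [negB, zeroB])

lemma signed_at_zero {σ : Equiv.Perm (BSet n)} (hσ : IsSigned σ) : σ (zeroB n) = zeroB n := by
  have h := hσ (zeroB n)
  rw [negB_zeroB] at h
  exact Subtype.ext (by show (σ (zeroB n)).1 = 0; omega)

lemma signed_pos_ne_zero {σ : Equiv.Perm (BSet n)} (hσ : IsSigned σ) (i : Fin n) :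
    (σ (posB i)).1 ≠ 0 := by
  intro hc
  have h0 := signed_at_zero hσ
  have : σ (posB i) = σ (zeroB n) := by
    rw [h0]
    exact Subtype.ext hc
  have := σ.injective this
  have := congrArg Subtype.val this
  simp [posB, zeroB] at this
  omega

def wordOf (σ : Equiv.Perm (BSet n)) : Fin n → Fin n × Bool :=
  fun i => (⟨(σ (posB i)).1.natAbs - 1, by
      have h := (σ (posB i)).2
      rw [Finset.mem_Icc] at h
      have := i.isLt
      omega⟩, decide ((σ (posB i)).1 < 0))

lemma sgnLetter_wordOf {σ : Equiv.Perm (BSet n)} (hσ : IsSigned σ) (i : Fin n) :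
    sgnLetter (wordOf σ i) = (σ (posB i)).1 := by
  have hne := signed_pos_ne_zero hσ i
  rw [show sgnLetter (wordOf σ i)
      = cond (wordOf σ i).2 (-(((wordOf σ i).1 : ℕ) : ℤ) - 1) ((((wordOf σ i).1 : ℕ) : ℤ) + 1)
      from rfl]
  by_cases h : (σ (posB i)).1 < 0
  · have htrue : (wordOf σ i).2 = true := decide_eq_true h
    rw [htrue]
    simp only [cond_true]
    show -(((σ (posB i)).1.natAbs - 1 : ℕ) : ℤ) - 1 = _
    omega
  · have hfalse : (wordOf σ i).2 = false := by
      simp only [wordOf]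
      simp [h]
    rw [hfalse]
    simp only [cond_false]
    show (((σ (posB i)).1.natAbs - 1 : ℕ) : ℤ) + 1 = _
    omega

lemma wordOf_inj {σ : Equiv.Perm (BSet n)} (hσ : IsSigned σ) :
    Function.Injective fun i => (wordOf σ i).1 := by
  intro i j h
  have h' : (σ (posB i)).1.natAbs - 1 = (σ (posB j)).1.natAbs - 1 := congrArg Fin.val h
  have hi := signed_pos_ne_zero hσ i
  have hj := signed_pos_ne_zero hσ j
  have habs : (σ (posB i)).1.natAbs = (σ (posB j)).1.natAbs := by omega
  have hcases : (σ (posB i)).1 = (σ (posB j)).1 ∨ (σ (posB i)).1 = -(σ (posB j)).1 := by omega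
  rcases hcases with hc | hc
  · have := σ.injective (Subtype.ext hc)
    have := congrArg Subtype.val this
    simp only [posB] at this
    exact Fin.ext (by omega)
  · rw [← hσ (posB j)] at hc
    have := σ.injective (Subtype.ext hc)
    have := congrArg Subtype.val this
    simp only [posB, negB] at this
    omega

lemma signed_ext {σ τ : Equiv.Perm (BSet n)} (hσ : IsSigned σ) (hτ : IsSigned τ)
    (h : ∀ i : Fin n, σ (posB i) = τ (posB i)) : σ = τ := by
  apply Equiv.ext
  intro x
  rcases lt_trichotomy x.1 0 with hx | hx | hx
  · have hb := x.2
    rw [Finset.mem_Icc] at hb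
    have hidx : x.1.natAbs - 1 < n := by omega
    have hx' : x = negB (posB ⟨x.1.natAbs - 1, hidx⟩) := by
      apply Subtype.ext
      show x.1 = -(((x.1.natAbs - 1 : ℕ) : ℤ) + 1)
      omega
    rw [hx']
    apply Subtype.ext
    rw [hσ (posB _), hτ (posB _), h]
  · have hx' : x = zeroB n := Subtype.ext hx
    rw [hx', signed_at_zero hσ, signed_at_zero hτ]
  · have hb := x.2
    rw [Finset.mem_Icc] at hb
    have hidx : x.1.natAbs - 1 < n := by omega
    have hx' : x = posB ⟨x.1.natAbs - 1, hidx⟩ := by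
      apply Subtype.ext
      show x.1 = ((x.1.natAbs - 1 : ℕ) : ℤ) + 1
      omega
    rw [hx']
    exact h _

lemma sgnLetter_mem (p : Fin n × Bool) : sgnLetter p ∈ Finset.Icc (-(n:ℤ)) n := by
  have h := sgnLetter_abs p
  have h2 : |sgnLetter p| ≤ (n:ℤ) := by
    rw [h]
    have := p.1.isLt
    omega
  exact Finset.mem_Icc.mpr (abs_le.mp h2)

def wpermFun (w : Fin n → Fin n × Bool) : BSet n → BSet n := fun x =>
  if h0 : x.1 = 0 then x
  else
    let i : Fin n := ⟨x.1.natAbs - 1, by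
      have := x.2; rw [Finset.mem_Icc] at this; omega⟩
    if 0 < x.1 then ⟨sgnLetter (w i), sgnLetter_mem _⟩
    else ⟨-sgnLetter (w i), by
      have := sgnLetter_mem (w i); rw [Finset.mem_Icc] at *; omega⟩

lemma wpermFun_zero (w : Fin n → Fin n × Bool) : wpermFun w (zeroB n) = zeroB n := dif_pos rfl

lemma wpermFun_pos (w : Fin n → Fin n × Bool) (x : BSet n) (hx : 0 < x.1)
    (h : x.1.natAbs - 1 < n) :
    wpermFun w x = ⟨sgnLetter (w ⟨x.1.natAbs - 1, h⟩), sgnLetter_mem _⟩ := by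
  rw [wpermFun, dif_neg (by omega), if_pos hx]

lemma wpermFun_pos_val (w : Fin n → Fin n × Bool) (x : BSet n) (hx : 0 < x.1)
    (h : x.1.natAbs - 1 < n) :
    (wpermFun w x).1 = sgnLetter (w ⟨x.1.natAbs - 1, h⟩) := by
  rw [wpermFun, dif_neg (by omega), if_pos hx]

lemma wpermFun_neg (w : Fin n → Fin n × Bool) (x : BSet n) (hx : x.1 < 0)
    (h : x.1.natAbs - 1 < n) :
    (wpermFun w x).1 = -sgnLetter (w ⟨x.1.natAbs - 1, h⟩) := by
  rw [wpermFun, dif_neg (by omega), if_neg (by omega)]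

lemma idx_lt (x : BSet n) (hx : x.1 ≠ 0) : x.1.natAbs - 1 < n := by
  have := x.2; rw [Finset.mem_Icc] at this; omega

lemma sgnLetter_ne_zero (p : Fin n × Bool) : sgnLetter p ≠ 0 := by
  intro hc
  have := sgnLetter_abs p
  rw [hc] at this
  simp at this
  omega

lemma wpermFun_inj (w : Fin n → Fin n × Bool) (hw : Function.Injective fun i => (w i).1) :
    Function.Injective (wpermFun w) := by
  have hw' : ∀ i j : Fin n, ((w i).1 : ℕ) = ((w j).1 : ℕ) → i = j :=
    fun i j hij => hw (Fin.ext hij)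
  have hidx_eq : ∀ (x y : BSet n) (hx : x.1 ≠ 0) (hy : y.1 ≠ 0),
      |sgnLetter (w ⟨x.1.natAbs - 1, idx_lt x hx⟩)| = |sgnLetter (w ⟨y.1.natAbs - 1, idx_lt y hy⟩)|
      → x.1.natAbs = y.1.natAbs := by
    intro x y hx hy h
    rw [sgnLetter_abs, sgnLetter_abs] at h
    have h2 : (⟨x.1.natAbs - 1, idx_lt x hx⟩ : Fin n) = ⟨y.1.natAbs - 1, idx_lt y hy⟩ :=
      hw' _ _ (by omega)
    have h3 := congrArg Fin.val h2
    simp only at h3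
    omega
  have hidx_eq' : ∀ (x y : BSet n) (hx : x.1 ≠ 0) (hy : y.1 ≠ 0),
      |sgnLetter (w ⟨x.1.natAbs - 1, idx_lt x hx⟩)| = |sgnLetter (w ⟨y.1.natAbs - 1, idx_lt y hy⟩)|
      → (⟨x.1.natAbs - 1, idx_lt x hx⟩ : Fin n) = ⟨y.1.natAbs - 1, idx_lt y hy⟩ := by
    intro x y hx hy h
    rw [sgnLetter_abs, sgnLetter_abs] at h
    exact hw' _ _ (by omega)
  have hz : ∀ (y : BSet n) (hy : y.1 ≠ 0), wpermFun w y ≠ zeroB n := by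
    intro y hy hc
    rcases lt_or_gt_of_ne hy with h | h
    · have := wpermFun_neg w y h (idx_lt y hy)
      rw [hc] at this
      have h0 : (0:ℤ) = -sgnLetter (w ⟨y.1.natAbs - 1, idx_lt y hy⟩) := this
      exact sgnLetter_ne_zero (w ⟨y.1.natAbs - 1, idx_lt y hy⟩) (by omega)
    · have := wpermFun_pos_val w y h (idx_lt y hy)
      rw [hc] at this
      have h0 : (0:ℤ) = sgnLetter (w ⟨y.1.natAbs - 1, idx_lt y hy⟩) := this
      exact sgnLetter_ne_zero (w ⟨y.1.natAbs - 1, idx_lt y hy⟩) (by omega)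
  intro x y hxy
  by_cases hx : x.1 = 0 <;> by_cases hy : y.1 = 0
  · exact Subtype.ext (by rw [hx, hy])
  · exfalso
    rw [show x = zeroB n from Subtype.ext hx, wpermFun_zero] at hxy
    exact hz y hy hxy.symm
  · exfalso
    rw [show y = zeroB n from Subtype.ext hy, wpermFun_zero] at hxy
    exact hz x hx hxy
  · have hv : (wpermFun w x).1 = (wpermFun w y).1 := congrArg Subtype.val hxy
    rcases lt_or_gt_of_ne hx with h1 | h1 <;> rcases lt_or_gt_of_ne hy with h2 | h2
    · rw [wpermFun_neg w x h1 (idx_lt x hx), wpermFun_neg w y h2 (idx_lt y hy)] at hv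
      have habs := hidx_eq x y hx hy (by rw [← abs_neg, hv, abs_neg])
      exact Subtype.ext (by omega)
    · exfalso
      rw [wpermFun_neg w x h1 (idx_lt x hx),
        wpermFun_pos_val w y h2 (idx_lt y hy)] at hv
      have h3 := hidx_eq' x y hx hy (by rw [← hv, abs_neg])
      rw [h3] at hv
      exact sgnLetter_ne_zero (w ⟨y.1.natAbs - 1, idx_lt y hy⟩) (by omega)
    · exfalso
      rw [wpermFun_pos_val w x h1 (idx_lt x hx),
        wpermFun_neg w y h2 (idx_lt y hy)] at hv
      have h3 := hidx_eq' x y hx hy (by rw [hv, abs_neg])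
      rw [h3] at hv
      exact sgnLetter_ne_zero (w ⟨y.1.natAbs - 1, idx_lt y hy⟩) (by omega)
    · rw [wpermFun_pos_val w x h1 (idx_lt x hx),
        wpermFun_pos_val w y h2 (idx_lt y hy)] at hv
      have habs := hidx_eq x y hx hy (by rw [hv])
      exact Subtype.ext (by omega)

end Bridge
section Bridge2
variable {n : ℕ}

lemma sgnLetter_inj (p q : Fin n × Bool) (h : sgnLetter p = sgnLetter q) : p = q := by
  have hp := sgnLetter_abs p
  have hq := sgnLetter_abs q
  have hsp := sgnLetter_neg_iff p
  have hsq := sgnLetter_neg_iff q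
  rw [h] at hp hsp
  have h1 : ((p.1 : ℕ) : ℤ) = ((q.1 : ℕ) : ℤ) := by omega
  have hfst : p.1 = q.1 := Fin.ext (by exact_mod_cast h1)
  have hsnd : p.2 = q.2 := by
    cases hb : p.2 <;> cases hc : q.2 <;> simp_all
  exact Prod.ext hfst hsnd

noncomputable def wperm (w : Fin n → Fin n × Bool)
    (hw : Function.Injective fun i => (w i).1) : Equiv.Perm (BSet n) :=
  Equiv.ofBijective (wpermFun w) (Finite.injective_iff_bijective.mp (wpermFun_inj w hw))

lemma wperm_posB (w : Fin n → Fin n × Bool) (hw : Function.Injective fun i => (w i).1)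
    (i : Fin n) : ((wperm w hw) (posB i)).1 = sgnLetter (w i) := by
  have hval : (posB (n := n) i).1 = ((i : ℕ) : ℤ) + 1 := rfl
  have hpos : 0 < (posB (n := n) i).1 := by rw [hval]; omega
  have hidx : (posB (n := n) i).1.natAbs - 1 < n := idx_lt _ (by rw [hval]; omega)
  show (wpermFun w (posB i)).1 = _
  rw [wpermFun_pos_val w (posB i) hpos hidx]
  have : (⟨(posB (n := n) i).1.natAbs - 1, hidx⟩ : Fin n) = i := by
    apply Fin.ext
    show (posB (n := n) i).1.natAbs - 1 = (i : ℕ)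
    rw [hval]
    omega
  rw [this]

lemma wperm_signed (w : Fin n → Fin n × Bool) (hw : Function.Injective fun i => (w i).1) :
    IsSigned (wperm w hw) := by
  intro x
  show (wpermFun w (negB x)).1 = -(wpermFun w x).1
  have hnegval : (negB x).1 = -x.1 := rfl
  rcases lt_trichotomy x.1 0 with h | h | h
  · have hnx : 0 < (negB x).1 := by rw [hnegval]; omega
    have hidn : (negB x).1.natAbs - 1 < n := idx_lt _ (by rw [hnegval]; omega)
    have hidx : x.1.natAbs - 1 < n := idx_lt x (by omega)
    rw [wpermFun_pos_val w (negB x) hnx hidn, wpermFun_neg w x h hidx, neg_neg]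
    have : (⟨(negB x).1.natAbs - 1, hidn⟩ : Fin n) = ⟨x.1.natAbs - 1, hidx⟩ := by
      apply Fin.ext
      show (negB x).1.natAbs - 1 = x.1.natAbs - 1
      rw [hnegval]
      omega
    rw [this]
  · have hx : x = zeroB n := Subtype.ext h
    rw [hx, negB_zeroB, wpermFun_zero]
    show (0 : ℤ) = -(0 : ℤ)
    ring
  · have hnx : (negB x).1 < 0 := by rw [hnegval]; omega
    have hidn : (negB x).1.natAbs - 1 < n := idx_lt _ (by rw [hnegval]; omega)
    have hidx : x.1.natAbs - 1 < n := idx_lt x (by omega)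
    rw [wpermFun_neg w (negB x) hnx hidn, wpermFun_pos_val w x h hidx]
    have : (⟨(negB x).1.natAbs - 1, hidn⟩ : Fin n) = ⟨x.1.natAbs - 1, hidx⟩ := by
      apply Fin.ext
      show (negB x).1.natAbs - 1 = x.1.natAbs - 1
      rw [hnegval]
      omega
    rw [this]

lemma descB_wperm (w : Fin n → Fin n × Bool) (hw : Function.Injective fun i => (w i).1) :
    descB (wperm w hw) = wDesc w := by
  rw [descB, wDesc]
  exact congrArg (fun l => descCount ((0 : ℤ) :: l))
    (congrArg List.ofFn (funext fun i => wperm_posB w hw i))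

lemma negCount_wperm (w : Fin n → Fin n × Bool) (hw : Function.Injective fun i => (w i).1) :
    negCount (wperm w hw) = wNeg w := by
  rw [negCount, wNeg]
  congr 1
  apply Finset.filter_congr
  intro i _
  rw [wperm_posB w hw i, sgnLetter_neg_iff]

end Bridge2

lemma perm_sum_eq_wSum (n : ℕ) :
    ∑ σ ∈ Finset.univ.filter (fun σ : Equiv.Perm (BSet n) => IsSigned σ),
      (-1 : Polynomial ℝ) ^ (negCount σ) * Polynomial.X ^ (descB σ) = wSum n := by
  rw [wSum]
  symm
  apply Finset.sum_bij (i := fun w hw => wperm w (Finset.mem_filter.mp hw).2)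
  · intro w hw
    exact Finset.mem_filter.mpr ⟨Finset.mem_univ _, wperm_signed _ _⟩
  · intro w1 h1 w2 h2 heq
    funext i
    apply sgnLetter_inj
    rw [← wperm_posB w1 (Finset.mem_filter.mp h1).2 i,
      ← wperm_posB w2 (Finset.mem_filter.mp h2).2 i, heq]
  · intro σ hσmem
    have hσ := (Finset.mem_filter.mp hσmem).2
    refine ⟨wordOf σ, Finset.mem_filter.mpr ⟨Finset.mem_univ _, wordOf_inj hσ⟩, ?_⟩
    apply signed_ext (wperm_signed _ _) hσ
    intro i
    apply Subtype.ext
    rw [wperm_posB, sgnLetter_wordOf hσ]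
  · intro w hw
    rw [descB_wperm, negCount_wperm]
lemma descB_le {n : ℕ} (σ : Equiv.Perm (BSet n)) : descB σ ≤ n := by
  rw [descB]
  have h := descCount_cons_le (0 : ℤ) (List.ofFn fun i : Fin n => (σ (posB i)).1)
  simpa using h

lemma card_split (n k : ℕ) : eulerianD n k + eulerianDt n k = eulerianB n k := by
  rw [eulerianD, eulerianDt, eulerianB, Fintype.card_subtype, Fintype.card_subtype,
    Fintype.card_subtype]
  rw [← Finset.card_filter_add_card_filter_not
    (s := Finset.univ.filter (fun σ : Equiv.Perm (BSet n) => IsSigned σ ∧ descB σ = k))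
    (p := fun σ => Even (negCount σ))]
  congr 1
  · apply congrArg Finset.card
    ext σ
    simp only [Finset.mem_filter, Finset.mem_univ, true_and]
    tauto
  · apply congrArg Finset.card
    ext σ
    simp only [Finset.mem_filter, Finset.mem_univ, true_and]
    tauto

lemma sum_signed_fiber (n : ℕ) :
    ∑ σ ∈ Finset.univ.filter (fun σ : Equiv.Perm (BSet n) => IsSigned σ),
      (-1 : Polynomial ℝ) ^ (negCount σ) * Polynomial.X ^ (descB σ)
    = ∑ k ∈ Finset.range (n + 1),
      (Polynomial.C (eulerianD n k : ℝ) - Polynomial.C (eulerianDt n k : ℝ)) *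
        Polynomial.X ^ k := by
  rw [← Finset.sum_fiberwise_of_maps_to (g := descB)
    (fun σ _ => Finset.mem_range.mpr (Nat.lt_succ_of_le (descB_le σ)))]
  apply Finset.sum_congr rfl
  intro k _
  have hterm : ∀ σ ∈ (Finset.univ.filter
      (fun σ : Equiv.Perm (BSet n) => IsSigned σ)).filter (fun σ => descB σ = k),
      (-1 : Polynomial ℝ) ^ (negCount σ) * Polynomial.X ^ (descB σ)
      = (if Even (negCount σ) then Polynomial.X ^ k else -Polynomial.X ^ k) := by
    intro σ hσ
    have hdesc : descB σ = k := (Finset.mem_filter.mp hσ).2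
    by_cases hpar : Even (negCount σ)
    · rw [if_pos hpar, hpar.neg_one_pow, one_mul, hdesc]
    · rw [if_neg hpar, (Nat.not_even_iff_odd.mp hpar).neg_one_pow, hdesc, neg_one_mul]
  rw [Finset.sum_congr rfl hterm, Finset.sum_ite, Finset.sum_const, Finset.sum_const]
  have hcardD : (((Finset.univ.filter
      (fun σ : Equiv.Perm (BSet n) => IsSigned σ)).filter (fun σ => descB σ = k)).filter
      (fun σ => Even (negCount σ))).card = eulerianD n k := by
    rw [eulerianD, Fintype.card_subtype]
    congr 1
    ext σ
    simp only [Finset.mem_filter, Finset.mem_univ, true_and]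
    tauto
  have hcardDt : (((Finset.univ.filter
      (fun σ : Equiv.Perm (BSet n) => IsSigned σ)).filter (fun σ => descB σ = k)).filter
      (fun σ => ¬ Even (negCount σ))).card = eulerianDt n k := by
    rw [eulerianDt, Fintype.card_subtype]
    congr 1
    ext σ
    simp only [Finset.mem_filter, Finset.mem_univ, true_and]
    tauto
  rw [hcardD, hcardDt, nsmul_eq_mul, nsmul_eq_mul,
    show ((eulerianD n k : ℕ) : Polynomial ℝ) = Polynomial.C ((eulerianD n k : ℝ)) from
      (map_natCast Polynomial.C _).symm,
    show ((eulerianDt n k : ℕ) : Polynomial ℝ) = Polynomial.C ((eulerianDt n k : ℝ)) from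
      (map_natCast Polynomial.C _).symm]
  ring

theorem stmt14 (n : ℕ) :
    polyDP n + polyDtP n = polyBP n ∧
    polyDP n - polyDtP n = (1 - Polynomial.X) ^ n ∧
    2 * polyDP n = polyBP n + (1 - Polynomial.X) ^ n ∧
    2 * polyDtP n = polyBP n - (1 - Polynomial.X) ^ n := by
  have h1 : polyDP n + polyDtP n = polyBP n := by
    rw [polyDP, polyDtP, polyBP, ← Finset.sum_add_distrib]
    apply Finset.sum_congr rfl
    intro k _
    rw [← add_mul, ← map_add]
    congr 2
    rw [← Nat.cast_add, card_split]
  have h2 : polyDP n - polyDtP n = (1 - Polynomial.X) ^ n := by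
    rw [← wSum_eq, ← perm_sum_eq_wSum, sum_signed_fiber]
    rw [polyDP, polyDtP, ← Finset.sum_sub_distrib]
    apply Finset.sum_congr rfl
    intro k _
    ring
  exact ⟨h1, h2, by linear_combination h1 + h2, by linear_combination h1 - h2⟩
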